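/- Let V be a finite-dimensional real vector space, G a positive definite symmetric bilinear form on V inducing G : V → V*, B : V → V* induced by an alternating form, and I : V → V a complex structure compatible with G and commuting appropriately, so that ω := G∘I (the Kähler form) is alternating and nondegenerate. Define on V ⊕ V* the maps 𝓘 = [[I, 0],[BI + IᵗB, -Iᵗ]] and 𝓙 = [[ω⁻¹B, -ω⁻¹],[ω + Bω⁻¹B, -Bω⁻¹]]. Then 𝓘² = -1, 𝓙² = -1, 𝓘𝓙 = 𝓙𝓘, and both 𝓘 and 𝓙 preserve the pairing q((a₁,a₂),(b₁,b₂)) = -⟨a₁,b₂⟩ - ⟨a₂,b₁⟩. -/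
import Mathlib


/-- Given a complex torus datum `(V, I, G, B)` with Kähler form `ω = G(·, I·)`
(invertible as a map `V → V*` with inverse `ωinv`), the generalized complex structures
`𝓘 = [[I, 0],[BI + IᵗB, -Iᵗ]]` and `𝓙 = [[ω⁻¹B, -ω⁻¹],[ω + Bω⁻¹B, -Bω⁻¹]]` on
`V ⊕ V*` satisfy `𝓘² = -1`, `𝓙² = -1`, `𝓘𝓙 = 𝓙𝓘`, and both preserve the split
pairing `q((a₁,a₂),(b₁,b₂)) = -⟨a₁,b₂⟩ - ⟨a₂,b₁⟩`. -/
theorem stmt19 (V : Type*) [AddCommGroup V] [Module ℝ V] [FiniteDimensional ℝ V]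
    (I : V →ₗ[ℝ] V) (hI : I ∘ₗ I = -LinearMap.id)
    (G : V →ₗ[ℝ] Module.Dual ℝ V)
    (hGsymm : ∀ v w, G v w = G w v)
    (hGpos : ∀ v, v ≠ 0 → 0 < G v v)
    (hGI : ∀ v w, G (I v) (I w) = G v w)
    (B : V →ₗ[ℝ] Module.Dual ℝ V) (hB : ∀ v w, B v w = - B w v)
    (ω : V →ₗ[ℝ] Module.Dual ℝ V) (hω : ∀ v w, ω v w = G v (I w))
    (ωinv : Module.Dual ℝ V →ₗ[ℝ] V)
    (hω1 : ωinv ∘ₗ ω = LinearMap.id) (hω2 : ω ∘ₗ ωinv = LinearMap.id)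
    (𝓘 𝓙 : (V × Module.Dual ℝ V) →ₗ[ℝ] (V × Module.Dual ℝ V))
    (h𝓘 : ∀ (a : V) (ξ : Module.Dual ℝ V),
      𝓘 (a, ξ) = (I a, B (I a) + I.dualMap (B a) - I.dualMap ξ))
    (h𝓙 : ∀ (a : V) (ξ : Module.Dual ℝ V),
      𝓙 (a, ξ) = (ωinv (B a) - ωinv ξ, ω a + B (ωinv (B a) - ωinv ξ))) :
    𝓘 ∘ₗ 𝓘 = -LinearMap.id ∧
    𝓙 ∘ₗ 𝓙 = -LinearMap.id ∧
    𝓘 ∘ₗ 𝓙 = 𝓙 ∘ₗ 𝓘 ∧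
    (∀ x y : V × Module.Dual ℝ V,
      -((𝓘 y).2 ((𝓘 x).1)) - ((𝓘 x).2 ((𝓘 y).1)) = -(y.2 x.1) - (x.2 y.1)) ∧
    (∀ x y : V × Module.Dual ℝ V,
      -((𝓙 y).2 ((𝓙 x).1)) - ((𝓙 x).2 ((𝓙 y).1)) = -(y.2 x.1) - (x.2 y.1)) := by
  have hI' : ∀ v, I (I v) = -v := fun v => by
    have := congrArg (fun f => f v) hI; simpa using this
  have hωinv1 : ∀ v, ωinv (ω v) = v := fun v => by
    have := congrArg (fun f => f v) hω1; simpa using this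
  have hωinv2 : ∀ η, ω (ωinv η) = η := fun η => by
    have := congrArg (fun f => f η) hω2; simpa using this
  have hωalt : ∀ v w, ω v w = - ω w v := by
    intro v w
    have h1 : ω w v = G (I v) w := by rw [hω, hGsymm]
    have h2 : G (I v) w = - ω v w := by
      have h3 := hGI v (I w)
      rw [hI'] at h3
      simp only [map_neg] at h3
      rw [hω]
      linarith
    rw [h1, h2]; ring
  have hkey : ∀ v w, ω v (I w) = - ω (I v) w := by
    intro v w
    have h1 : ω v (I w) = - G v w := by
      rw [hω, hI']; simp
    have h2 : ω (I v) w = G v w := by rw [hω]; exact hGI v w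
    rw [h1, h2]
  have hdual : ∀ (η : Module.Dual ℝ V), I.dualMap η = -(ω (I (ωinv η))) := by
    intro η
    ext w
    have h := hkey (ωinv η) w
    rw [hωinv2] at h
    simpa using h
  have hIωinv : ∀ (η : Module.Dual ℝ V), I (ωinv η) = - ωinv (I.dualMap η) := by
    intro η
    rw [hdual, map_neg, hωinv1]; simp
  have hωω : ∀ v (η : Module.Dual ℝ V), ω v (ωinv η) = - η v := by
    intro v η
    rw [hωalt, hωinv2]
  refine ⟨?_, ?_, ?_, ?_, ?_⟩
  · apply LinearMap.ext
    rintro ⟨a, ξ⟩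
    simp only [LinearMap.comp_apply, h𝓘, LinearMap.neg_apply, LinearMap.id_apply]
    refine Prod.ext ?_ ?_
    · simp [hI']
    · ext w
      simp only [Prod.snd_neg, map_add, map_sub, map_neg, LinearMap.add_apply,
        LinearMap.sub_apply, LinearMap.neg_apply, LinearMap.dualMap_apply, hI']
      ring
  · apply LinearMap.ext
    rintro ⟨a, ξ⟩
    simp only [LinearMap.comp_apply, h𝓙, LinearMap.neg_apply, LinearMap.id_apply]
    refine Prod.ext ?_ ?_
    · simp [hωinv1]
    · ext w
      simp only [LinearMap.add_apply, map_add, map_sub, LinearMap.sub_apply,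
        LinearMap.neg_apply, Prod.snd_neg, hωinv1, hωinv2]
      ring
  · apply LinearMap.ext
    rintro ⟨a, ξ⟩
    simp only [LinearMap.comp_apply, h𝓘, h𝓙]
    have hfst : I (ωinv (B a) - ωinv ξ)
        = ωinv (B (I a)) - (ωinv (B (I a)) + ωinv (I.dualMap (B a)) - ωinv (I.dualMap ξ)) := by
      rw [map_sub, hIωinv, hIωinv]
      abel
    refine Prod.ext ?_ ?_
    · simpa using hfst
    · ext w
      simp only [map_add, map_sub, LinearMap.add_apply, LinearMap.sub_apply,
        LinearMap.dualMap_apply, LinearMap.neg_apply]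
      have hf := congrArg (fun v => B v w) hfst
      simp only [map_add, map_sub, LinearMap.add_apply, LinearMap.sub_apply] at hf
      have hk := hkey a w
      linarith
  · rintro ⟨a, ξ⟩ ⟨b, η⟩
    rw [h𝓘, h𝓘]
    simp only [map_add, map_sub, LinearMap.add_apply, LinearMap.sub_apply,
      LinearMap.dualMap_apply, hI', map_neg, LinearMap.neg_apply]
    have h1 := hB (I b) (I a)
    have h2 := hB b a
    linarith
  · rintro ⟨a, ξ⟩ ⟨b, η⟩
    rw [h𝓙, h𝓙]
    simp only [map_add, map_sub, LinearMap.add_apply, LinearMap.sub_apply, hωω]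
    have h1 := hB (ωinv (B b)) (ωinv (B a))
    have h2 := hB (ωinv (B b)) (ωinv ξ)
    have h3 := hB (ωinv η) (ωinv (B a))
    have h4 := hB (ωinv η) (ωinv ξ)
    have h5 := hB a b
    linarith
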